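/- Let k, a, b be integers with 0 < a ≤ k and 0 < b ≤ k, and let p be a prime satisfying p · (1 + 2^b) = 2^(k+1) − 2^a − 1. Then n = 2^k · p is 2-near perfect with omitted divisors 2^a and 2^b · p, i.e. σ(n) = 2n + 2^a + 2^b · p. -/

import Mathlib

open ArithmeticFunction
open scoped ArithmeticFunction.sigma

lemma sum_two_pow (m : ℕ) : ∑ i ∈ Finset.range m, 2 ^ i = 2 ^ m - 1 := by
  induction m with
  | zero => simp
  | succ n ih =>
    rw [Finset.sum_range_succ, ih, pow_succ]
    have : 1 ≤ 2 ^ n := Nat.one_le_two_pow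
    omega

theorem family_three_is_two_near_perfect
    (k a b p n : ℕ) (ha : 0 < a) (hak : a ≤ k) (hb : 0 < b) (hbk : b ≤ k)
    (hpeq : p * (1 + 2 ^ b) = 2 ^ (k + 1) - 2 ^ a - 1) (hp : p.Prime)
    (hn : n = 2 ^ k * p) :
    σ 1 n = 2 * n + 2 ^ a + 2 ^ b * p := by
  have hlt : 2 ^ a < 2 ^ (k + 1) := Nat.pow_lt_pow_right one_lt_two (by omega)
  have h2X : 2 ^ (k + 1) = p * (1 + 2 ^ b) + 2 ^ a + 1 := by omega
  -- p is odd
  have hpodd : p ≠ 2 := by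
    intro h
    have hb2 : 2 ^ b = 2 * 2 ^ (b - 1) := by
      rw [← pow_succ']
      congr 1
      omega
    have ha2 : 2 ^ a = 2 * 2 ^ (a - 1) := by
      rw [← pow_succ']
      congr 1
      omega
    have hk2 : 2 ^ (k + 1) = 2 * 2 ^ k := by rw [pow_succ]; ring
    subst h
    omega
  have hcop : Nat.Coprime (2 ^ k) p := by
    apply Nat.Coprime.pow_left
    rcases (Nat.coprime_primes Nat.prime_two hp).2 (fun h => hpodd h.symm) with h
    exact h
  rw [hn, isMultiplicative_sigma.map_mul_of_coprime hcop,
    sigma_one_apply_prime_pow Nat.prime_two, sum_two_pow,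
    show p = p ^ 1 by ring, sigma_one_apply_prime_pow hp]
  simp only [Finset.sum_range_succ, Finset.sum_range_zero, pow_zero, pow_one]
  rw [show 2 * (2 ^ k * p) = 2 ^ (k + 1) * p by rw [pow_succ]; ring,
    h2X, Nat.add_sub_cancel]
  ring
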